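/- For the linear program: minimize -Σ_{i=1}^m 10^{m-i} x_i subject to 2 Σ_{j=1}^{i-1} 10^{i-j} x_j + x_i ≤ 100^{i-1} for i = 1,…,m and x ≥ 0, the point x* = (0,…,0, 100^{m-1}) is optimal with objective value -100^{m-1}. -/

import Mathlib

open Finset

/-- The second Klee–Minty variant (4.2): `x* = (0, …, 0, 100^{m-1})` is feasible and
optimal for `min -∑ 10^{m-i} x_i` subject to
`2 ∑_{j<i} 10^{i-j} x_j + x_i ≤ 100^{i-1}` and `x ≥ 0` (indices written here 0-based). -/
theorem klee_minty_variant2_optimal (m : ℕ) (hm : 0 < m)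
    (xstar : Fin m → ℝ)
    (hxstar : ∀ i : Fin m, xstar i = if (i : ℕ) = m - 1 then 100 ^ (m - 1) else 0) :
    ((∀ i, 0 ≤ xstar i) ∧
      (∀ i : Fin m, 2 * ∑ j ∈ Finset.Iio i, 10 ^ ((i : ℕ) - (j : ℕ)) * xstar j + xstar i
        ≤ 100 ^ (i : ℕ))) ∧
    (-∑ i : Fin m, (10 : ℝ) ^ (m - 1 - (i : ℕ)) * xstar i = -(100 : ℝ) ^ (m - 1)) ∧
    (∀ x : Fin m → ℝ, (∀ i, 0 ≤ x i) →
      (∀ i : Fin m, 2 * ∑ j ∈ Finset.Iio i, 10 ^ ((i : ℕ) - (j : ℕ)) * x j + x i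
        ≤ 100 ^ (i : ℕ)) →
      ∑ i : Fin m, (10 : ℝ) ^ (m - 1 - (i : ℕ)) * x i ≤ (100 : ℝ) ^ (m - 1)) := by
  have hlt : m - 1 < m := Nat.sub_lt hm one_pos
  set i₀ : Fin m := ⟨m - 1, hlt⟩ with hi₀
  have huniv : (Finset.univ : Finset (Fin m)) = insert i₀ (Finset.Iio i₀) := by
    ext j
    simp only [Finset.mem_univ, Finset.mem_insert, Finset.mem_Iio, Fin.lt_def, Fin.ext_iff,
      hi₀, true_iff]
    have := j.isLt
    omega
  have hni : i₀ ∉ Finset.Iio i₀ := by simp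
  refine ⟨⟨?_, ?_⟩, ?_, ?_⟩
  · intro i
    rw [hxstar]
    split <;> positivity
  · intro i
    have hsum : ∑ j ∈ Finset.Iio i, (10 : ℝ) ^ ((i : ℕ) - (j : ℕ)) * xstar j = 0 := by
      apply Finset.sum_eq_zero
      intro j hj
      rw [Finset.mem_Iio, Fin.lt_def] at hj
      have hj2 : (j : ℕ) ≠ m - 1 := by have := i.isLt; omega
      rw [hxstar]
      simp [hj2]
    rw [hsum, hxstar, mul_zero, zero_add]
    split_ifs with h
    · rw [h]
    · positivity
  · have hsum : ∑ j ∈ Finset.Iio i₀, (10 : ℝ) ^ (m - 1 - (j : ℕ)) * xstar j = 0 := by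
      apply Finset.sum_eq_zero
      intro j hj
      rw [Finset.mem_Iio, Fin.lt_def] at hj
      have hj2 : (j : ℕ) ≠ m - 1 := by omega
      rw [hxstar]
      simp [hj2]
    rw [huniv, Finset.sum_insert hni, hsum, add_zero, hxstar]
    simp [hi₀]
  · intro x hx0 hfeas
    have h := hfeas i₀
    have hS : 0 ≤ ∑ j ∈ Finset.Iio i₀, (10 : ℝ) ^ ((i₀ : ℕ) - (j : ℕ)) * x j := by
      apply Finset.sum_nonneg
      intro j _
      have := hx0 j
      positivity
    rw [huniv, Finset.sum_insert hni]
    have hcoe : (i₀ : ℕ) = m - 1 := rfl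
    rw [hcoe] at h hS ⊢
    simp only [Nat.sub_self, pow_zero, one_mul]
    linarith
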